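/- Let ψ be a SAT instance with m clauses over n > 2 variables. Then: ψ is satisfiable if and only if min_synch(A(ψ)) ≤ n + 2. Moreover if ψ is satisfiable then min_synch(A(ψ)) ≤ n + 2, and if ψ is unsatisfiable then min_synch(A(ψ)) > 2(n − 1). -/

import Mathlib

/-- The three-letter alphabet {a, b, c}. -/
inductive Letter3 where
  | a | b | c
deriving DecidableEq

/-- Extension of a transition function to words (left-to-right action). -/
def runW {Q A : Type*} (δ : Q → A → Q) : Q → List A → Q
  | q, [] => q
  | q, x :: w => runW δ (δ q x) w

/-- States of Berlinkov's automaton A(ψ) for a SAT instance with m clauses and n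
variables.  `q i j` encodes q_{i+1,j+1} (so `q ⟨m⟩ ⟨n⟩` is the state z₁),
`p i j` encodes p_{i+1,j+1}, and `z0` is the zero state. -/
inductive St (m n : ℕ) where
  | q : Fin (m + 1) → Fin (n + 1) → St m n
  | p : Fin (m + 1) → Fin (n + 1) → St m n
  | z0 : St m n
deriving DecidableEq

/-- The transition function of Berlinkov's automaton A(ψ).  `pos i j` means the
literal x_{j+1} occurs in clause c_{i+1}; `neg i j` means ¬x_{j+1} occurs there. -/
def St.delta {m n : ℕ} (pos neg : Fin m → Fin n → Bool) : St m n → Letter3 → St m n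
  | .q i j, .a =>
      if hj : (j : ℕ) < n then
        if hi : (i : ℕ) < m then
          if pos ⟨i, hi⟩ ⟨j, hj⟩ then .z0 else .q i ⟨(j : ℕ) + 1, by omega⟩
        else .q i ⟨(j : ℕ) + 1, by omega⟩
      else if (i : ℕ) < m then .z0 else .q i ⟨0, by omega⟩
  | .q i j, .b =>
      if hj : (j : ℕ) < n then
        if hi : (i : ℕ) < m then
          if neg ⟨i, hi⟩ ⟨j, hj⟩ then .z0 else .q i ⟨(j : ℕ) + 1, by omega⟩
        else .q i ⟨(j : ℕ) + 1, by omega⟩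
      else if (i : ℕ) < m then .z0 else .q i ⟨0, by omega⟩
  | .q i j, .c =>
      if (j : ℕ) < n then .q i ⟨0, by omega⟩
      else if (i : ℕ) < m then .q ⟨m, by omega⟩ ⟨0, by omega⟩ else .z0
  | .p i j, x =>
      if hj : (j : ℕ) < n then .p i ⟨(j : ℕ) + 1, by omega⟩
      else match x with
        | .c => .q i ⟨0, by omega⟩
        | _ => .z0
  | .z0, _ => .z0

/-- Clause c_{i+1} is satisfied by the truth assignment τ. -/
def clauseSat {m n : ℕ} (pos neg : Fin m → Fin n → Bool) (τ : Fin n → Bool) (i : Fin m) : Prop :=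
  ∃ j : Fin n, (pos i j = true ∧ τ j = true) ∨ (neg i j = true ∧ τ j = false)

/-- The word v(τ) ∈ {a,b}ⁿ encoding a truth assignment. -/
def encWord {n : ℕ} (τ : Fin n → Bool) : List Letter3 :=
  List.ofFn fun j : Fin n => if τ j then Letter3.a else Letter3.b

section BerlinkovAux
variable {m n : ℕ} (pos neg : Fin m → Fin n → Bool)
local notation "δ" => St.delta pos neg

theorem runW_append {Q A : Type*} (d : Q → A → Q) (x : Q) (u v : List A) :
    runW d x (u ++ v) = runW d (runW d x u) v := by
  induction u generalizing x with
  | nil => rfl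
  | cons y u ih => simp [runW, ih]

theorem runW_z0 (l : List Letter3) : runW δ (.z0 : St m n) l = .z0 := by
  induction l with
  | nil => rfl
  | cons x l ih => simpa [runW, St.delta] using ih

theorem runW_split {Q : Type*} (d : Q → Letter3 → Q) (x : Q) (w : List Letter3)
    (k : ℕ) (hk : k < w.length) :
    runW d x w = runW d (d (runW d x (w.take k)) w[k]) (w.drop (k+1)) := by
  conv_lhs => rw [← List.take_append_drop k w, List.drop_eq_getElem_cons hk]
  rw [runW_append]
  rfl

theorem climb_q (i : Fin (m+1)) :
    ∀ (l : List Letter3) (j : ℕ) (hj : j + l.length ≤ n),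
      (∀ k (hk : k < l.length), l[k] ≠ Letter3.c) →
      (∀ (hi : (i:ℕ) < m) (k : ℕ) (hk : k < l.length) (hkn : j + k < n),
        (l[k] = Letter3.a → pos ⟨i,hi⟩ ⟨j+k, hkn⟩ = false) ∧
        (l[k] = Letter3.b → neg ⟨i,hi⟩ ⟨j+k, hkn⟩ = false)) →
      runW δ (.q i ⟨j, by omega⟩) l = .q i ⟨j + l.length, by omega⟩
  | [], j, hj, _, _ => rfl
  | x :: l, j, hj, hab, hnk => by
    simp only [List.length_cons] at hj ⊢
    have hjn : j < n := by omega
    have hstep : δ (.q i ⟨j, by omega⟩) x = .q i ⟨j+1, by omega⟩ := by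
      match x with
      | Letter3.c => exact absurd rfl (hab 0 (by simp))
      | Letter3.a =>
        by_cases hi : (i:ℕ) < m
        · have := (hnk hi 0 (by simp) (by omega)).1 (by simp)
          simp only [Nat.add_zero] at this
          simp [St.delta, hjn, hi, this]
        · simp [St.delta, hjn, hi]
      | Letter3.b =>
        by_cases hi : (i:ℕ) < m
        · have := (hnk hi 0 (by simp) (by omega)).2 (by simp)
          simp only [Nat.add_zero] at this
          simp [St.delta, hjn, hi, this]
        · simp [St.delta, hjn, hi]
    have hfin : (⟨j + (l.length + 1), by omega⟩ : Fin (n+1))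
        = ⟨(j+1) + l.length, by omega⟩ := by simp only [Fin.mk.injEq]; omega
    rw [runW, hstep, hfin]
    exact climb_q i l (j+1) (by omega)
      (fun k hk => by have := hab (k+1) (by simpa using Nat.succ_lt_succ hk); exact this)
      (fun hi k hk hkn => by
        have := hnk hi (k+1) (by simpa using Nat.succ_lt_succ hk) (by omega)
        simp only [List.getElem_cons_succ] at this
        constructor
        · intro h; have := this.1 h
          convert this using 3; omega
        · intro h; have := this.2 h
          convert this using 3; omega)

theorem kill_q (i : Fin (m+1)) (hi : (i:ℕ) < m) :
    ∀ (l : List Letter3) (j : ℕ) (hj : j + l.length ≤ n),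
      (∀ k (hk : k < l.length), l[k] ≠ Letter3.c) →
      (∃ k, ∃ (hk : k < l.length) (hkn : j + k < n),
        (l[k] = Letter3.a ∧ pos ⟨i,hi⟩ ⟨j+k, hkn⟩ = true) ∨
        (l[k] = Letter3.b ∧ neg ⟨i,hi⟩ ⟨j+k, hkn⟩ = true)) →
      runW δ (.q i ⟨j, by omega⟩) l = .z0
  | [], j, hj, _, hex => by obtain ⟨k, hk, _⟩ := hex; simp at hk
  | x :: l, j, hj, hab, hex => by
    simp only [List.length_cons] at hj
    have hjn : j < n := by omega
    obtain ⟨k, hk, hkn, hw⟩ := hex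
    match k, hk, hkn, hw with
    | 0, hk, hkn, hw =>
      simp only [List.getElem_cons_zero, Nat.add_zero] at hw
      rcases hw with ⟨hx, hp⟩ | ⟨hx, hp⟩
      · subst hx
        have hp' : pos ⟨i, hi⟩ ⟨j, hjn⟩ = true := by convert hp using 3 <;> omega
        have hstep : δ (.q i ⟨j, by omega⟩) Letter3.a = .z0 := by
          simp [St.delta, hjn, hi, hp']
        rw [runW, hstep, runW_z0]
      · subst hx
        have hp' : neg ⟨i, hi⟩ ⟨j, hjn⟩ = true := by convert hp using 3 <;> omega
        have hstep : δ (.q i ⟨j, by omega⟩) Letter3.b = .z0 := by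
          simp [St.delta, hjn, hi, hp']
        rw [runW, hstep, runW_z0]
    | k+1, hk, hkn, hw =>
      simp only [List.length_cons] at hk
      simp only [List.getElem_cons_succ] at hw
      have hxc : x ≠ Letter3.c := hab 0 (by simp)
      have hrec := kill_q i hi l (j+1) (by omega)
        (fun r hr => by have := hab (r+1) (by simpa using Nat.succ_lt_succ hr); exact this)
        ⟨k, by omega, by omega, by
          rcases hw with ⟨hx, hp⟩ | ⟨hx, hp⟩
          · left; exact ⟨hx, by convert hp using 3 <;> omega⟩
          · right; exact ⟨hx, by convert hp using 3 <;> omega⟩⟩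
      rw [runW]
      match x, hxc with
      | Letter3.a, _ =>
        by_cases hp : pos ⟨i, hi⟩ ⟨j, hjn⟩
        · have hs : δ (.q i ⟨j, by omega⟩) Letter3.a = .z0 := by simp [St.delta, hjn, hi, hp]
          rw [hs, runW_z0]
        · have hs : δ (.q i ⟨j, by omega⟩) Letter3.a = .q i ⟨j+1, by omega⟩ := by
            simp [St.delta, hjn, hi, hp]
          rw [hs]; exact hrec
      | Letter3.b, _ =>
        by_cases hp : neg ⟨i, hi⟩ ⟨j, hjn⟩
        · have hs : δ (.q i ⟨j, by omega⟩) Letter3.b = .z0 := by simp [St.delta, hjn, hi, hp]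
          rw [hs, runW_z0]
        · have hs : δ (.q i ⟨j, by omega⟩) Letter3.b = .q i ⟨j+1, by omega⟩ := by
            simp [St.delta, hjn, hi, hp]
          rw [hs]; exact hrec

theorem climb_p (i : Fin (m+1)) :
    ∀ (l : List Letter3) (j : ℕ) (hj : j + l.length ≤ n),
      runW δ (.p i ⟨j, by omega⟩) l = .p i ⟨j + l.length, by omega⟩
  | [], j, hj => rfl
  | x :: l, j, hj => by
    simp only [List.length_cons] at hj ⊢
    have hjn : j < n := by omega
    have hstep : δ (.p i ⟨j, by omega⟩) x = .p i ⟨j+1, by omega⟩ := by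
      simp [St.delta, hjn]
    have hfin : (⟨j + (l.length + 1), by omega⟩ : Fin (n+1))
        = ⟨(j+1) + l.length, by omega⟩ := by simp only [Fin.mk.injEq]; omega
    rw [runW, hstep, hfin]
    exact climb_p i l (j+1) (by omega)

theorem die_p (i : Fin (m+1)) :
    ∀ (l : List Letter3) (j : ℕ) (hj : j ≤ n) (hlong : n < j + l.length),
      (∀ k (hk : k < l.length), l[k] ≠ Letter3.c) →
      runW δ (.p i ⟨j, by omega⟩) l = .z0
  | [], j, hj, hlong, _ => by simp at hlong; omega
  | x :: l, j, hj, hlong, hab => by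
    simp only [List.length_cons] at hlong
    by_cases hjn : j < n
    · have hstep : δ (.p i ⟨j, by omega⟩) x = .p i ⟨j+1, by omega⟩ := by
        simp [St.delta, hjn]
      rw [runW, hstep]
      exact die_p i l (j+1) (by omega) (by omega)
        (fun k hk => by have := hab (k+1) (by simpa using Nat.succ_lt_succ hk); exact this)
    · have hxc : x ≠ Letter3.c := hab 0 (by simp)
      have hstep : δ (.p i ⟨j, by omega⟩) x = .z0 := by
        match x, hxc with
        | Letter3.a, _ => simp [St.delta, hjn]
        | Letter3.b, _ => simp [St.delta, hjn]
      rw [runW, hstep, runW_z0]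

theorem Zmin :
    ∀ (l : List Letter3) (j : ℕ) (hj : j ≤ n),
      runW δ (.q (⟨m, by omega⟩ : Fin (m+1)) ⟨j, by omega⟩) l = .z0 →
      (n - j) + 1 ≤ l.length
  | [], j, hj, h => by simp [runW] at h
  | x :: l, j, hj, h => by
    simp only [List.length_cons]
    by_cases hjn : j < n
    · rw [runW] at h
      match x with
      | Letter3.c =>
        have hstep : δ (.q (⟨m, by omega⟩ : Fin (m+1)) ⟨j, by omega⟩) Letter3.c
            = .q ⟨m, by omega⟩ ⟨0, by omega⟩ := by simp [St.delta, hjn]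
        rw [hstep] at h
        have := Zmin l 0 (by omega) h
        omega
      | Letter3.a =>
        have hstep : δ (.q (⟨m, by omega⟩ : Fin (m+1)) ⟨j, by omega⟩) Letter3.a
            = .q ⟨m, by omega⟩ ⟨j+1, by omega⟩ := by simp [St.delta, hjn]
        rw [hstep] at h
        have := Zmin l (j+1) (by omega) h
        omega
      | Letter3.b =>
        have hstep : δ (.q (⟨m, by omega⟩ : Fin (m+1)) ⟨j, by omega⟩) Letter3.b
            = .q ⟨m, by omega⟩ ⟨j+1, by omega⟩ := by simp [St.delta, hjn]
        rw [hstep] at h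
        have := Zmin l (j+1) (by omega) h
        omega
    · omega

theorem Zdeath :
    ∀ (w : List Letter3) (j : ℕ) (hj : j ≤ n),
      runW δ (.q (⟨m, by omega⟩ : Fin (m+1)) ⟨j, by omega⟩) w = .z0 →
      ∃ s e : ℕ, e < w.length ∧ w.getD e Letter3.a = Letter3.c ∧
        (∀ r, s ≤ r → r < e → w.getD r Letter3.c ≠ Letter3.c) ∧
        ((s = 0 ∧ e = n - j) ∨
         (1 ≤ s ∧ e = s + n ∧ (w.getD (s-1) Letter3.a = Letter3.c ∨ n - j ≤ s - 1)))
  | [], j, hj, h => by simp [runW] at h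
  | x :: w, j, hj, h => by
    rw [runW] at h
    by_cases hjn : j < n
    · match x with
      | Letter3.c =>
        have hstep : δ (.q (⟨m, by omega⟩ : Fin (m+1)) ⟨j, by omega⟩) Letter3.c
            = .q ⟨m, by omega⟩ ⟨0, by omega⟩ := by simp [St.delta, hjn]
        rw [hstep] at h
        obtain ⟨s', e', he', hc', hblk', halt'⟩ := Zdeath w 0 (by omega) h
        refine ⟨s'+1, e'+1, by simpa using he', by simpa using hc', ?_, ?_⟩
        · intro r h1 h2
          match r, h1 with
          | r+1, h1 =>
            simpa using hblk' r (by omega) (by omega)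
        · refine Or.inr ⟨by omega, ?_, ?_⟩
          · rcases halt' with ⟨h1, h2⟩ | ⟨h1, h2, h3⟩ <;> omega
          · rcases halt' with ⟨h1, h2⟩ | ⟨h1, h2, h3⟩
            · left; subst h1; simp
            · rcases h3 with h3 | h3
              · left
                have hss : s' + 1 - 1 = (s' - 1) + 1 := by omega
                rw [hss]
                simpa using h3
              · right; omega
      | Letter3.a =>
        have hstep : δ (.q (⟨m, by omega⟩ : Fin (m+1)) ⟨j, by omega⟩) Letter3.a
            = .q ⟨m, by omega⟩ ⟨j+1, by omega⟩ := by simp [St.delta, hjn]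
        rw [hstep] at h
        obtain ⟨s', e', he', hc', hblk', halt'⟩ := Zdeath w (j+1) (by omega) h
        rcases halt' with ⟨h1, h2⟩ | ⟨h1, h2, h3⟩
        · refine ⟨0, e'+1, by simpa using he', by simpa using hc', ?_, Or.inl ⟨rfl, by omega⟩⟩
          intro r _ h4
          match r with
          | 0 => simp
          | r+1 => simpa using hblk' r (by omega) (by omega)
        · refine ⟨s'+1, e'+1, by simpa using he', by simpa using hc', ?_, ?_⟩
          · intro r h4 h5
            match r, h4 with
            | r+1, h4 => simpa using hblk' r (by omega) (by omega)
          · refine Or.inr ⟨by omega, by omega, ?_⟩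
            rcases h3 with h3 | h3
            · left
              have hss : s' + 1 - 1 = (s' - 1) + 1 := by omega
              rw [hss]
              simpa using h3
            · right; omega
      | Letter3.b =>
        have hstep : δ (.q (⟨m, by omega⟩ : Fin (m+1)) ⟨j, by omega⟩) Letter3.b
            = .q ⟨m, by omega⟩ ⟨j+1, by omega⟩ := by simp [St.delta, hjn]
        rw [hstep] at h
        obtain ⟨s', e', he', hc', hblk', halt'⟩ := Zdeath w (j+1) (by omega) h
        rcases halt' with ⟨h1, h2⟩ | ⟨h1, h2, h3⟩
        · refine ⟨0, e'+1, by simpa using he', by simpa using hc', ?_, Or.inl ⟨rfl, by omega⟩⟩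
          intro r _ h4
          match r with
          | 0 => simp
          | r+1 => simpa using hblk' r (by omega) (by omega)
        · refine ⟨s'+1, e'+1, by simpa using he', by simpa using hc', ?_, ?_⟩
          · intro r h4 h5
            match r, h4 with
            | r+1, h4 => simpa using hblk' r (by omega) (by omega)
          · refine Or.inr ⟨by omega, by omega, ?_⟩
            rcases h3 with h3 | h3
            · left
              have hss : s' + 1 - 1 = (s' - 1) + 1 := by omega
              rw [hss]
              simpa using h3
            · right; omega
    · have hjn' : j = n := by omega
      match x with
      | Letter3.c =>
        refine ⟨0, 0, by simp, by simp, by intro r h1 h2; omega, Or.inl ⟨rfl, by omega⟩⟩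
      | Letter3.a =>
        have hstep : δ (.q (⟨m, by omega⟩ : Fin (m+1)) ⟨j, by omega⟩) Letter3.a
            = .q ⟨m, by omega⟩ ⟨0, by omega⟩ := by simp [St.delta, hjn]
        rw [hstep] at h
        obtain ⟨s', e', he', hc', hblk', halt'⟩ := Zdeath w 0 (by omega) h
        refine ⟨s'+1, e'+1, by simpa using he', by simpa using hc', ?_, ?_⟩
        · intro r h1 h2
          match r, h1 with
          | r+1, h1 => simpa using hblk' r (by omega) (by omega)
        · refine Or.inr ⟨by omega, ?_, Or.inr (by omega)⟩
          rcases halt' with ⟨h1, h2⟩ | ⟨h1, h2, h3⟩ <;> omega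
      | Letter3.b =>
        have hstep : δ (.q (⟨m, by omega⟩ : Fin (m+1)) ⟨j, by omega⟩) Letter3.b
            = .q ⟨m, by omega⟩ ⟨0, by omega⟩ := by simp [St.delta, hjn]
        rw [hstep] at h
        obtain ⟨s', e', he', hc', hblk', halt'⟩ := Zdeath w 0 (by omega) h
        refine ⟨s'+1, e'+1, by simpa using he', by simpa using hc', ?_, ?_⟩
        · intro r h1 h2
          match r, h1 with
          | r+1, h1 => simpa using hblk' r (by omega) (by omega)
        · refine Or.inr ⟨by omega, ?_, Or.inr (by omega)⟩
          rcases halt' with ⟨h1, h2⟩ | ⟨h1, h2, h3⟩ <;> omega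

theorem tail_long (v : List Letter3) (hvn : n < v.length)
    (hblock : ∀ r, r < n → v.getD r Letter3.c ≠ Letter3.c)
    (hcn : v.getD n Letter3.a = Letter3.c)
    (i : Fin m)
    (hiu : ¬ clauseSat pos neg (fun j => decide (v.getD (j:ℕ) Letter3.c = Letter3.a)) i)
    (hz : runW δ (.q (⟨(i:ℕ), by omega⟩ : Fin (m+1)) ⟨0, by omega⟩) v = .z0) :
    2*n + 2 ≤ v.length := by
  simp only [clauseSat, not_exists, not_or, not_and] at hiu
  have htl : (v.take n).length = n := by
    rw [List.length_take]; omega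
  have hclimb : runW δ (.q (⟨(i:ℕ), by omega⟩ : Fin (m+1)) ⟨0, by omega⟩) (v.take n)
      = .q ⟨(i:ℕ), by omega⟩ ⟨0 + (v.take n).length, by omega⟩ := by
    refine climb_q pos neg _ (v.take n) 0 (by omega) ?_ ?_
    · intro k hk
      rw [List.getElem_take]
      rw [← List.getD_eq_getElem v Letter3.c (by omega : k < v.length)]
      exact hblock k (by omega)
    · intro hi2 k hk hkn
      have hgd : (v.take n)[k] = v.getD k Letter3.c := by
        rw [List.getElem_take, List.getD_eq_getElem v Letter3.c (by omega : k < v.length)]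
      have hieq : (⟨(i:ℕ), hi2⟩ : Fin m) = i := by simp
      have := hiu ⟨k, by omega⟩
      constructor
      · intro ha
        rw [hgd] at ha
        by_contra hp
        have hp' : pos i ⟨k, by omega⟩ = true := by
          have : pos ⟨(i:ℕ), hi2⟩ ⟨0+k, hkn⟩ = true := by
            cases hh : pos ⟨(i:ℕ), hi2⟩ ⟨0+k, hkn⟩
            · exact absurd hh hp
            · rfl
          rw [hieq] at this
          convert this using 2
          simp only [Fin.mk.injEq]; omega
        have h2 := this.1 hp'
        rw [decide_eq_true_eq] at h2
        exact h2 ha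
      · intro hb
        rw [hgd] at hb
        by_contra hp
        have hp' : neg i ⟨k, by omega⟩ = true := by
          have : neg ⟨(i:ℕ), hi2⟩ ⟨0+k, hkn⟩ = true := by
            cases hh : neg ⟨(i:ℕ), hi2⟩ ⟨0+k, hkn⟩
            · exact absurd hh hp
            · rfl
          rw [hieq] at this
          convert this using 2
          simp only [Fin.mk.injEq]; omega
        have h2 := this.2 hp'
        rw [Bool.not_eq_false, decide_eq_true_eq] at h2
        exact Letter3.noConfusion (hb.symm.trans h2)
  rw [runW_split (St.delta pos neg) _ v n hvn] at hz
  rw [hclimb] at hz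
  have hfin : (⟨0 + (v.take n).length, by omega⟩ : Fin (n+1)) = ⟨n, by omega⟩ := by
    simp only [Fin.mk.injEq]; omega
  rw [hfin] at hz
  have hvc : v[n] = Letter3.c := by
    rw [← List.getD_eq_getElem v Letter3.a hvn]; exact hcn
  rw [hvc] at hz
  have hstep : δ (.q (⟨(i:ℕ), by omega⟩ : Fin (m+1)) (⟨n, by omega⟩ : Fin (n+1))) Letter3.c
      = .q ⟨m, by omega⟩ ⟨0, by omega⟩ := by
    simp [St.delta, i.isLt]
  rw [hstep] at hz
  have := Zmin pos neg (v.drop (n+1)) 0 (by omega) hz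
  rw [List.length_drop] at this
  omega

theorem long_of_unsat
    (huns : ∀ τ : Fin n → Bool, ∃ i : Fin m, ¬ clauseSat pos neg τ i)
    (w : List Letter3) (hw : ∀ s : St m n, runW δ s w = .z0) :
    2*n + 2 ≤ w.length := by
  obtain ⟨s, e, he, hc, hblk, halt⟩ := Zdeath pos neg w 0 (by omega) (hw _)
  rcases halt with ⟨hs0, hen⟩ | ⟨hs1, hesn, halt2⟩
  · -- s = 0, e = n
    have hen' : e = n := by omega
    subst hen'
    obtain ⟨i, hiu⟩ := huns (fun j => decide (w.getD (j:ℕ) Letter3.c = Letter3.a))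
    exact tail_long pos neg w he (fun r hr => hblk r (by omega) (by omega)) hc i hiu (hw _)
  · rcases halt2 with hC | hB
    · by_cases hsle : s ≤ n + 1
      · have hlv : (w.drop s).length = w.length - s := List.length_drop
        have hvn : n < (w.drop s).length := by omega
        obtain ⟨i, hiu⟩ := huns (fun j => decide ((w.drop s).getD (j:ℕ) Letter3.c = Letter3.a))
        have hblockv : ∀ r, r < n → (w.drop s).getD r Letter3.c ≠ Letter3.c := by
          intro r hr
          have heq : (w.drop s).getD r Letter3.c = w.getD (s+r) Letter3.c := by
            rw [List.getD_eq_getElem _ _ (by omega : r < (w.drop s).length),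
              List.getD_eq_getElem _ _ (by omega : s + r < w.length), List.getElem_drop]
          rw [heq]
          exact hblk (s+r) (by omega) (by omega)
        have hcnv : (w.drop s).getD n Letter3.a = Letter3.c := by
          rw [List.getD_eq_getElem _ _ hvn, List.getElem_drop,
            ← List.getD_eq_getElem _ Letter3.a (by omega : s + n < w.length)]
          rw [hesn] at hc
          exact hc
        have hz : runW δ (.q (⟨(i:ℕ), by omega⟩ : Fin (m+1)) ⟨0, by omega⟩) (w.drop s) = .z0 := by
          have h0 := hw (.p ⟨(i:ℕ), by omega⟩ ⟨n+1-s, by omega⟩)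
          rw [runW_split (St.delta pos neg) _ w (s-1) (by omega)] at h0
          have htl : (w.take (s-1)).length = s - 1 := by
            rw [List.length_take]; omega
          have hclimbp := climb_p pos neg (⟨(i:ℕ), by omega⟩ : Fin (m+1)) (w.take (s-1))
            (n+1-s) (by omega)
          rw [hclimbp] at h0
          have hfin : (⟨n+1-s + (w.take (s-1)).length, by omega⟩ : Fin (n+1))
              = ⟨n, by omega⟩ := by simp only [Fin.mk.injEq]; omega
          rw [hfin] at h0
          have hwc : w[s-1] = Letter3.c := by
            rw [← List.getD_eq_getElem w Letter3.a (by omega : s - 1 < w.length)]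
            exact hC
          rw [hwc] at h0
          have hstep : δ (.p (⟨(i:ℕ), by omega⟩ : Fin (m+1)) (⟨n, by omega⟩ : Fin (n+1)))
              Letter3.c = .q ⟨(i:ℕ), by omega⟩ ⟨0, by omega⟩ := by
            simp [St.delta]
          rw [hstep] at h0
          have hdd : s - 1 + 1 = s := by omega
          rw [hdd] at h0
          exact h0
        have := tail_long pos neg (w.drop s) hvn hblockv hcnv i hiu hz
        omega
      · omega
    · omega

theorem enc_ne_c (τ : Fin n → Bool) :
    ∀ (k : ℕ) (hk : k < (encWord τ).length), (encWord τ)[k] ≠ Letter3.c := by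
  intro k hk
  simp only [encWord, List.getElem_ofFn]
  split <;> simp

theorem run_q0 (τ : Fin n → Bool) (hτ : ∀ i : Fin m, clauseSat pos neg τ i) (i : Fin (m+1)) :
    runW δ (.q i ⟨0, by omega⟩) (encWord τ ++ [Letter3.c]) = .z0 := by
  rw [runW_append]
  by_cases hi : (i:ℕ) < m
  · have hkill : runW δ (.q i ⟨0, by omega⟩) (encWord τ) = .z0 := by
      obtain ⟨j0, hj0⟩ := hτ ⟨(i:ℕ), hi⟩
      refine kill_q pos neg i hi (encWord τ) 0 (by simp [encWord]) (enc_ne_c τ)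
        ⟨(j0:ℕ), by simp [encWord], by simpa using j0.isLt, ?_⟩
      rcases hj0 with ⟨hpj, hτj⟩ | ⟨hnj, hτj⟩
      · left
        constructor
        · simp only [encWord, List.getElem_ofFn]
          simp [hτj]
        · convert hpj using 2 <;> simp [Fin.ext_iff]
      · right
        constructor
        · simp only [encWord, List.getElem_ofFn]
          simp [hτj]
        · convert hnj using 2 <;> simp [Fin.ext_iff]
    rw [hkill, runW]
    have : δ (.z0 : St m n) Letter3.c = .z0 := rfl
    rw [this]
    rfl
  · have hclimb := climb_q pos neg i (encWord τ) 0 (by simp [encWord]) (enc_ne_c τ)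
      (fun hi2 => absurd hi2 hi)
    rw [hclimb]
    have hfin : (⟨0 + (encWord τ).length, by simp only [encWord, List.length_ofFn]; omega⟩ : Fin (n+1)) = ⟨n, by omega⟩ := by
      simp only [Fin.mk.injEq]
      simp [encWord]
    rw [hfin, runW]
    have hstep : δ (.q i (⟨n, by omega⟩ : Fin (n+1))) Letter3.c = .z0 := by
      simp [St.delta, hi]
    rw [hstep]
    rfl

theorem sync_of_sat (τ : Fin n → Bool) (hτ : ∀ i : Fin m, clauseSat pos neg τ i) :
    ∀ s : St m n, runW δ s (Letter3.c :: (encWord τ ++ [Letter3.c])) = .z0 := by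
  intro s
  rw [runW]
  match s with
  | .z0 =>
    have : δ (.z0 : St m n) Letter3.c = .z0 := rfl
    rw [this]
    exact runW_z0 pos neg _
  | .q i j =>
    by_cases hj : (j:ℕ) < n
    · have hstep : δ (.q i j) Letter3.c = .q i ⟨0, by omega⟩ := by
        simp [St.delta, hj]
      rw [hstep]
      exact run_q0 pos neg τ hτ i
    · by_cases hi : (i:ℕ) < m
      · have hstep : δ (.q i j) Letter3.c = .q ⟨m, by omega⟩ ⟨0, by omega⟩ := by
          simp [St.delta, hj, hi]
        rw [hstep]
        exact run_q0 pos neg τ hτ _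
      · have hstep : δ (.q i j) Letter3.c = .z0 := by
          simp [St.delta, hj, hi]
        rw [hstep]
        exact runW_z0 pos neg _
  | .p i j =>
    by_cases hj : (j:ℕ) < n
    · have hstep : δ (.p i j) Letter3.c = .p i ⟨(j:ℕ)+1, by omega⟩ := by
        simp [St.delta, hj]
      rw [hstep, runW_append]
      have hdie : runW δ (.p i ⟨(j:ℕ)+1, by omega⟩) (encWord τ) = .z0 := by
        refine die_p pos neg i (encWord τ) ((j:ℕ)+1) (by omega) ?_ (enc_ne_c τ)
        simp [encWord]
      rw [hdie, runW]
      have : δ (.z0 : St m n) Letter3.c = .z0 := rfl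
      rw [this]
      rfl
    · have hstep : δ (.p i j) Letter3.c = .q i ⟨0, by omega⟩ := by
        simp [St.delta, hj]
      rw [hstep]
      exact run_q0 pos neg τ hτ i

end BerlinkovAux

/-- For n > 2: ψ is satisfiable iff A(ψ) has a synchronizing word of length at
most n+2; moreover satisfiability gives a synchronizing word of length ≤ n+2,
and unsatisfiability forces every synchronizing word to be longer than 2(n−1). -/
theorem sat_iff_short_sync
    {m n : ℕ} (hn : 2 < n) (pos neg : Fin m → Fin n → Bool) :
    ((∃ τ : Fin n → Bool, ∀ i : Fin m, clauseSat pos neg τ i) ↔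
      ∃ w : List Letter3, (∃ p : St m n, ∀ s : St m n, runW (St.delta pos neg) s w = p) ∧
        w.length ≤ n + 2) ∧
    ((∃ τ : Fin n → Bool, ∀ i : Fin m, clauseSat pos neg τ i) →
      ∃ w : List Letter3, (∃ p : St m n, ∀ s : St m n, runW (St.delta pos neg) s w = p) ∧
        w.length ≤ n + 2) ∧
    ((∀ τ : Fin n → Bool, ∃ i : Fin m, ¬ clauseSat pos neg τ i) →
      ∀ w : List Letter3,
        (∃ p : St m n, ∀ s : St m n, runW (St.delta pos neg) s w = p) →
        2 * (n - 1) < w.length) := by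
  have hub : (∃ τ : Fin n → Bool, ∀ i : Fin m, clauseSat pos neg τ i) →
      ∃ w : List Letter3, (∃ p : St m n, ∀ s : St m n, runW (St.delta pos neg) s w = p) ∧
        w.length ≤ n + 2 := by
    rintro ⟨τ, hτ⟩
    refine ⟨Letter3.c :: (encWord τ ++ [Letter3.c]), ⟨.z0, sync_of_sat pos neg τ hτ⟩, ?_⟩
    simp [encWord]
  have hlb : (∀ τ : Fin n → Bool, ∃ i : Fin m, ¬ clauseSat pos neg τ i) →
      ∀ w : List Letter3,
        (∃ p : St m n, ∀ s : St m n, runW (St.delta pos neg) s w = p) →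
        2 * n + 2 ≤ w.length := by
    rintro h w ⟨p, hp⟩
    have hpz : p = .z0 := (hp .z0).symm.trans (runW_z0 pos neg w)
    subst hpz
    exact long_of_unsat pos neg h w hp
  refine ⟨⟨hub, ?_⟩, hub, ?_⟩
  · rintro ⟨w, hsync, hlen⟩
    by_contra hns
    push_neg at hns
    have := hlb hns w hsync
    omega
  · intro h w hsync
    have := hlb h w hsync
    omega
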